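/- Let n be a positive integer and m ∈ {0,...,n-1}, and let r_m be the rotation v ↦ (v+m) mod n acting on {0,...,n-1}. Then two vertices x and y lie in the same cycle of the disjoint cycle decomposition of r_m if and only if x ≡ y (mod gcd(n,m)). -/
import Mathlib


/-- Two vertices `x, y` of `ZMod n` lie in the same cycle of the rotation
`v ↦ v + m` (i.e. `y` is reachable from `x` by iterating the rotation) iff
`x ≡ y (mod gcd(n,m))`. -/
theorem orbital_stmt2 (n m : ℕ) (hn : 0 < n) (hm : m < n) (x y : ZMod n) :
    (∃ j : ℕ, y = x + (j : ZMod n) * (m : ZMod n)) ↔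
      x.val ≡ y.val [MOD Nat.gcd n m] := by
  haveI : NeZero n := ⟨hn.ne'⟩
  set g := Nat.gcd n m with hg
  have hgpos : 0 < g := Nat.gcd_pos_of_pos_left m hn
  haveI : NeZero g := ⟨hgpos.ne'⟩
  have hdn : g ∣ n := Nat.gcd_dvd_left n m
  have hdm : g ∣ m := Nat.gcd_dvd_right n m
  constructor
  · rintro ⟨j, rfl⟩
    have h0 : (m : ZMod g) = 0 := (ZMod.natCast_eq_zero_iff m g).mpr hdm
    have hx : (x.val : ZMod g) = ((x + (j : ZMod n) * (m : ZMod n)).val : ZMod g) := by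
      rw [ZMod.natCast_val, ZMod.natCast_val]
      show (ZMod.castHom hdn (ZMod g)) x
          = (ZMod.castHom hdn (ZMod g)) (x + (j : ZMod n) * (m : ZMod n))
      rw [map_add, map_mul, map_natCast, map_natCast, h0, mul_zero, add_zero]
    exact (ZMod.natCast_eq_natCast_iff _ _ _).mp hx
  · intro h
    obtain ⟨c, hc⟩ := (Nat.ModEq.dvd h : (g : ℤ) ∣ (y.val : ℤ) - x.val)
    have hb : (g : ℤ) = n * Nat.gcdA n m + m * Nat.gcdB n m := Nat.gcd_eq_gcd_ab n m
    have h2 : ((y.val : ℤ) - x.val)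
        = (c * Nat.gcdA n m) * n + (c * Nat.gcdB n m) * m := by
      rw [hc, hb]; ring
    refine ⟨((c * Nat.gcdB n m : ℤ) : ZMod n).val, ?_⟩
    rw [ZMod.natCast_val, ZMod.cast_id]
    have h3 := congrArg (fun z : ℤ => (z : ZMod n)) h2
    push_cast at h3
    simp only [ZMod.natCast_val, ZMod.cast_id, ZMod.natCast_self, ZMod.intCast_cast,
      mul_zero, zero_mul, add_zero, zero_add] at h3
    push_cast
    linear_combination h3
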